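/- Let k be an algebraically closed field of characteristic 2 and let e > 1 be an integer. Consider the homogeneous polynomial F = Y^{2e} − X^{2e−1}·Y − X·Z^{2e−1} in k[X,Y,Z]. If (x, y, z) ∈ k³ satisfies F(x,y,z) = 0 and all three partial derivatives ∂F/∂X, ∂F/∂Y, ∂F/∂Z vanish at (x,y,z), then (x,y,z) = (0,0,0). (In other words, the plane projective curve C ⊆ ℙ²_k defined by Y^{2e} − X^{2e−1}Y = XZ^{2e−1} is a smooth curve.) -/
import Mathlib


open MvPolynomial

/-- Let `k` be an algebraically closed field of characteristic `2` and `e > 1`.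
For `F = Y^{2e} - X^{2e-1}·Y - X·Z^{2e-1}` in `k[X,Y,Z]` (with `X = X 0`, `Y = X 1`, `Z = X 2`),
any common zero of `F` and its three formal partial derivatives is `(0,0,0)`; i.e. the plane
projective curve `Y^{2e} - X^{2e-1}Y = XZ^{2e-1}` in `ℙ²_k` is smooth. -/
theorem plane_curve_smooth
    (k : Type*) [Field k] [IsAlgClosed k] [CharP k 2] (e : ℕ) (he : 1 < e)
    (F : MvPolynomial (Fin 3) k)
    (hF : F = (X 1 : MvPolynomial (Fin 3) k) ^ (2 * e)
        - (X 0) ^ (2 * e - 1) * X 1 - X 0 * (X 2) ^ (2 * e - 1))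
    (x y z : k)
    (h0 : eval ![x, y, z] F = 0)
    (hdX : eval ![x, y, z] (pderiv 0 F) = 0)
    (hdY : eval ![x, y, z] (pderiv 1 F) = 0)
    (hdZ : eval ![x, y, z] (pderiv 2 F) = 0) :
    x = 0 ∧ y = 0 ∧ z = 0 := by
  subst hF
  have h2 : (2 : k) = 0 := by exact_mod_cast CharP.cast_eq_zero k 2
  have hodd : ((2 * e - 1 : ℕ) : k) = 1 := by
    rw [show 2 * e - 1 = 2 * (e - 1) + 1 from by omega]
    push_cast
    rw [h2]; ring
  have heven : ((2 * e : ℕ) : k) = 0 := by push_cast; rw [h2]; ring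
  simp only [map_sub, pderiv_mul, pderiv_pow, pderiv_X_self,
    pderiv_X_of_ne (show (0:Fin 3) ≠ 1 by decide),
    pderiv_X_of_ne (show (0:Fin 3) ≠ 2 by decide),
    pderiv_X_of_ne (show (1:Fin 3) ≠ 0 by decide),
    pderiv_X_of_ne (show (1:Fin 3) ≠ 2 by decide),
    pderiv_X_of_ne (show (2:Fin 3) ≠ 0 by decide),
    pderiv_X_of_ne (show (2:Fin 3) ≠ 1 by decide),
    map_mul, map_pow, map_add, map_neg, map_one, eval_X, map_natCast, smul_eq_mul,
    mul_zero, zero_mul, mul_one, one_mul, add_zero, zero_add,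
    Matrix.cons_val_zero, Matrix.cons_val_one, Matrix.head_cons, Matrix.cons_val_two,
    Matrix.tail_cons, sub_zero, zero_sub, hodd, heven] at h0 hdX hdY hdZ
  have hx : x = 0 := by
    have : x ^ (2 * e - 1) = 0 := by linear_combination -hdY
    exact pow_eq_zero_iff (by omega) |>.mp this
  subst hx
  have hz : z = 0 := by
    have : z ^ (2 * e - 1) = 0 := by
      simpa [zero_pow (show 2 * e - 1 - 1 ≠ 0 by omega)] using hdX
    exact pow_eq_zero_iff (by omega) |>.mp this
  subst hz
  have hy : y = 0 := by
    have : y ^ (2 * e) = 0 := by simpa [zero_pow (show 2 * e - 1 ≠ 0 by omega)] using h0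
    exact pow_eq_zero_iff (by omega) |>.mp this
  exact ⟨rfl, hy, rfl⟩
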